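/- Let $a \in \mathbb{R}^p$ have nonnegative entries, $\gamma \in (0, 1/2)$, $J = \{i : a_i > 1\}$, $K = \sum_{i \in J} \log(a_i)$, and $\mu_\gamma = |\{i : a_i^2 > (1-\gamma)^2\}|$. Then $\log \mathcal{N}(E_a, B_1^p) \leq K + \mu_\gamma \log(3/\gamma)$. -/

import Mathlib

/-- The ellipsoid with half-axis lengths `a i` (a coordinate with `a i = 0`
forces `v i = 0`). -/
def ellipsoid (p : ℕ) (a : Fin p → ℝ) : Set (Fin p → ℝ) :=
  {v | (∑ i, v i ^ 2 / a i ^ 2) ≤ 1 ∧ ∀ i, a i = 0 → v i = 0}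

/-- `𝒩(K, L)`: the smallest `n` such that `K` can be covered by `n` translates
of `L` centered at points of `K`. -/
noncomputable def coverNum {p : ℕ} (K L : Set (Fin p → ℝ)) : ℕ :=
  sInf {n | ∃ v : Fin n → (Fin p → ℝ),
    (∀ i, v i ∈ K) ∧ K ⊆ ⋃ i, (fun w => v i + w) '' L}

open Metric Set MeasureTheory
open scoped ENNReal Pointwise

lemma net_of_card_bound {α : Type*} [MetricSpace α] (K : Set α) (γ : ℝ) (hγ : 0 < γ)
    (N₀ : ℕ) (hbound : ∀ F : Finset α, ↑F ⊆ K →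
      (∀ c ∈ F, ∀ d ∈ F, c ≠ d → γ < dist c d) → F.card ≤ N₀) :
    ∃ F : Finset α, ↑F ⊆ K ∧ F.card ≤ N₀ ∧ ∀ x ∈ K, ∃ c ∈ F, dist x c ≤ γ := by
  classical
  set A : Set ℕ := {n | ∃ F : Finset α, ↑F ⊆ K ∧
      (∀ c ∈ F, ∀ d ∈ F, c ≠ d → γ < dist c d) ∧ F.card = n} with hA
  have h0 : (0 : ℕ) ∈ A := ⟨∅, by simp⟩
  have hbdd : BddAbove A := ⟨N₀, fun n ⟨F, hF1, hF2, hF3⟩ => hF3 ▸ hbound F hF1 hF2⟩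
  obtain ⟨F, hF1, hF2, hF3⟩ := Nat.sSup_mem ⟨0, h0⟩ hbdd
  refine ⟨F, hF1, hF3 ▸ hbound F hF1 hF2, fun x hx => ?_⟩
  by_contra hcon
  push_neg at hcon
  have hxF : x ∉ F := fun hxF => absurd (hcon x hxF) (by simp [hγ.le])
  have hmem : F.card + 1 ∈ A := by
    refine ⟨insert x F, ?_, ?_, by rw [Finset.card_insert_of_notMem hxF]⟩
    · intro y hy
      rcases Finset.mem_insert.1 (by exact_mod_cast hy) with rfl | hy'
      · exact hx
      · exact hF1 hy'
    · intro c hc d hd hcd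
      rcases Finset.mem_insert.1 hc with rfl | hc' <;>
        rcases Finset.mem_insert.1 hd with rfl | hd'
      · exact absurd rfl hcd
      · exact hcon d hd'
      · rw [dist_comm]; exact hcon c hc'
      · exact hF2 c hc' d hd' hcd
  have := le_csSup hbdd hmem
  omega

open FiniteDimensional in
lemma packing_vol_bound {E : Type*} [NormedAddCommGroup E] [NormedSpace ℝ E]
    [MeasurableSpace E] [BorelSpace E] [FiniteDimensional ℝ E]
    (μ : Measure E) [μ.IsAddHaarMeasure]
    (K : Set E) {s γ : ℝ} (hs : 0 < s) (hγ : 0 < γ)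
    (hball : closedBall (0 : E) s ⊆ K) (hKconv : Convex ℝ K)
    (F : Finset E) (hF : ↑F ⊆ K)
    (hsep : ∀ c ∈ F, ∀ d ∈ F, c ≠ d → γ < dist c d) :
    (F.card : ℝ≥0∞) * μ (closedBall (0 : E) (γ/2)) ≤ μ ((1 + γ/(2*s)) • K) := by
  classical
  set t := γ / (2 * s) with ht
  have ht0 : 0 < t := div_pos hγ (by linarith)
  have hdisj : (↑F : Set E).PairwiseDisjoint (fun c => closedBall c (γ/2)) := by
    intro c hc d hd hcd
    apply closedBall_disjoint_closedBall
    have := hsep c hc d hd hcd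
    linarith
  have hunion : (⋃ c ∈ F, closedBall c (γ/2)) ⊆ (1 + t) • K := by
    intro x hx
    simp only [mem_iUnion] at hx
    obtain ⟨c, hc, hxc⟩ := hx
    have hcK : c ∈ K := hF hc
    set w : E := (2 * s / γ) • (x - c) with hw
    have hwK : w ∈ K := by
      apply hball
      simp only [mem_closedBall, dist_zero_right, hw, norm_smul, Real.norm_eq_abs]
      have : ‖x - c‖ ≤ γ / 2 := by rwa [← dist_eq_norm, ← mem_closedBall]
      rw [abs_of_pos (by positivity)]
      have h2s : (0:ℝ) ≤ 2 * s / γ := by positivity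
      calc 2 * s / γ * ‖x - c‖ ≤ 2 * s / γ * (γ / 2) :=
            mul_le_mul_of_nonneg_left this h2s
        _ = s := by field_simp
    have hx_eq : x = c + t • w := by
      rw [hw, smul_smul, ht]
      have : γ / (2 * s) * (2 * s / γ) = 1 := by field_simp
      rw [this, one_smul]; abel
    have : (1 + t)⁻¹ • c + (t / (1 + t)) • w ∈ K :=
      hKconv hcK hwK (by positivity) (by positivity) (by field_simp)
    rw [Set.mem_smul_set]
    refine ⟨_, this, ?_⟩
    rw [smul_add, smul_smul, smul_smul, hx_eq]
    congr 1
    · rw [mul_inv_cancel₀ (by positivity), one_smul]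
    · congr 1
      field_simp
  calc (F.card : ℝ≥0∞) * μ (closedBall (0 : E) (γ/2))
      = ∑ c ∈ F, μ (closedBall c (γ/2)) := by
        rw [Finset.sum_congr rfl fun c _ => μ.addHaar_closedBall_center c (γ/2)]
        simp [Finset.sum_const, nsmul_eq_mul]
    _ = μ (⋃ c ∈ F, closedBall c (γ/2)) := by
        rw [measure_biUnion_finset hdisj fun c _ => measurableSet_closedBall]
    _ ≤ μ ((1 + t) • K) := measure_mono hunion

section Euclid

variable {ι : Type*} [Fintype ι] [DecidableEq ι]

local notation "E" => EuclideanSpace ℝ ι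

lemma euc_mem_closedBall (u : E) {r : ℝ} (hr : 0 ≤ r) :
    u ∈ closedBall (0 : E) r ↔ ∑ i, u i ^ 2 ≤ r ^ 2 := by
  rw [mem_closedBall, dist_zero_right, EuclideanSpace.norm_eq]
  simp only [Real.norm_eq_abs, sq_abs]
  constructor
  · intro h
    calc ∑ i, u i ^ 2 = Real.sqrt (∑ i, u i ^ 2) ^ 2 := by
          rw [Real.sq_sqrt (by positivity)]
      _ ≤ r ^ 2 := by apply pow_le_pow_left₀ (Real.sqrt_nonneg _) h
  · intro h
    calc Real.sqrt (∑ i, u i ^ 2) ≤ Real.sqrt (r ^ 2) := Real.sqrt_le_sqrt h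
      _ = r := Real.sqrt_sq hr

/-- diagonal linear map -/
def diagMap (b : ι → ℝ) : E →ₗ[ℝ] E where
  toFun w := WithLp.toLp 2 (fun i => b i * w i)
  map_add' w v := by ext i; simp [mul_add]
  map_smul' c w := by ext i; simp [mul_comm, mul_assoc, mul_left_comm]

lemma diagMap_det (b : ι → ℝ) : LinearMap.det (diagMap (ι := ι) b) = ∏ i, b i := by
  rw [← LinearMap.det_toMatrix (PiLp.basisFun 2 ℝ ι)]
  have : (LinearMap.toMatrix (PiLp.basisFun 2 ℝ ι) (PiLp.basisFun 2 ℝ ι)) (diagMap b)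
      = Matrix.diagonal b := by
    ext i j
    rw [LinearMap.toMatrix_apply, PiLp.basisFun_repr, PiLp.basisFun_apply]
    simp only [diagMap, LinearMap.coe_mk, AddHom.coe_mk, Matrix.diagonal_apply]
    by_cases h : i = j <;> simp [h, Pi.single_apply]
  rw [this, Matrix.det_diagonal]

lemma ell_eq_image (b : ι → ℝ) (hb : ∀ i, 0 < b i) :
    {w : E | ∑ i, w i ^ 2 / b i ^ 2 ≤ 1} = (diagMap b) '' closedBall 0 1 := by
  ext w
  simp only [mem_setOf_eq, mem_image]
  constructor
  · intro h
    refine ⟨WithLp.toLp 2 (fun i => w i / b i), ?_, ?_⟩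
    · rw [euc_mem_closedBall _ zero_le_one]
      simpa [div_pow] using h
    · ext i
      simp only [diagMap, LinearMap.coe_mk, AddHom.coe_mk, PiLp.toLp_apply]
      rw [mul_comm, div_mul_cancel₀ _ (hb i).ne']
  · rintro ⟨u, hu, rfl⟩
    rw [euc_mem_closedBall _ zero_le_one] at hu
    simp only [diagMap, LinearMap.coe_mk, AddHom.coe_mk, PiLp.toLp_apply]
    calc ∑ i, (b i * u i) ^ 2 / b i ^ 2 = ∑ i, u i ^ 2 := by
          apply Finset.sum_congr rfl; intro i _
          rw [mul_pow, mul_comm]; exact mul_div_cancel_right₀ _ (pow_ne_zero 2 (hb i).ne')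
      _ ≤ 1 := by simpa using hu

end Euclid

section Euclid2

variable {ι : Type*} [Fintype ι] [DecidableEq ι]

local notation "E" => EuclideanSpace ℝ ι

lemma euclidean_ellipsoid_net (b : ι → ℝ) (γ : ℝ) (hγ0 : 0 < γ) (hγ2 : γ < 1/2)
    (hb : ∀ i, 1 - γ < b i) :
    ∃ F : Finset E, ↑F ⊆ {w : E | ∑ i, w i ^ 2 / b i ^ 2 ≤ 1}
      ∧ (F.card : ℝ) ≤ ∏ i, ((2/γ + 1/(1-γ)) * b i)
      ∧ ∀ x ∈ {w : E | ∑ i, w i ^ 2 / b i ^ 2 ≤ 1}, ∃ c ∈ F, dist x c ≤ γ := by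
  classical
  set K : Set E := {w : E | ∑ i, w i ^ 2 / b i ^ 2 ≤ 1} with hK
  set μ : Measure E := volume with hμ
  have hs : 0 < 1 - γ := by linarith
  have hbpos : ∀ i, 0 < b i := fun i => hs.trans (hb i)
  set t : ℝ := γ / (2 * (1 - γ)) with hts
  have ht0 : 0 < t := by positivity
  set C : ℝ := ∏ i, ((2/γ + 1/(1-γ)) * b i) with hC
  have hfactor : ∀ i, 0 < (2/γ + 1/(1-γ)) * b i := fun i =>
    mul_pos (add_pos (div_pos two_pos hγ0) (div_pos one_pos hs)) (hbpos i)
  have hC0 : 0 ≤ C := Finset.prod_nonneg fun i _ => (hfactor i).le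
  have himg : K = (diagMap b) '' closedBall 0 1 := ell_eq_image b hbpos
  have hconv : Convex ℝ K := himg ▸ (convex_closedBall _ _).linear_image _
  have hball : closedBall (0 : E) (1 - γ) ⊆ K := by
    intro w hw
    rw [euc_mem_closedBall _ hs.le] at hw
    have : ∀ i, w i ^ 2 / b i ^ 2 ≤ w i ^ 2 / (1 - γ) ^ 2 := by
      intro i
      apply div_le_div_of_nonneg_left (by positivity) (by positivity)
      exact pow_le_pow_left₀ hs.le (hb i).le 2
    calc ∑ i, w i ^ 2 / b i ^ 2 ≤ ∑ i, w i ^ 2 / (1 - γ) ^ 2 :=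
          Finset.sum_le_sum fun i _ => this i
      _ = (∑ i, w i ^ 2) / (1 - γ) ^ 2 := by rw [← Finset.sum_div]
      _ ≤ (1 - γ) ^ 2 / (1 - γ) ^ 2 := by gcongr
      _ = 1 := div_self (by positivity)
  -- volume facts
  set n : ℕ := Fintype.card ι with hn
  have hfr : Module.finrank ℝ (EuclideanSpace ℝ ι) = n := finrank_euclideanSpace
  set volB : ℝ≥0∞ := μ (closedBall (0 : E) 1) with hvolB
  have hvolB0 : volB ≠ 0 := (measure_closedBall_pos μ 0 one_pos).ne'
  have hvolBtop : volB ≠ ⊤ := measure_closedBall_lt_top.ne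
  have hKvol : μ K = ENNReal.ofReal (∏ i, b i) * volB := by
    rw [himg, Measure.addHaar_image_linearMap, diagMap_det,
      abs_of_pos (Finset.prod_pos fun i _ => hbpos i)]
  -- the cardinality bound for separated sets
  have hcard : ∀ F : Finset E, ↑F ⊆ K →
      (∀ c ∈ F, ∀ d ∈ F, c ≠ d → γ < dist c d) → F.card ≤ ⌊C⌋₊ := by
    intro F hF hsep
    have hpack := packing_vol_bound μ K hs hγ0 hball hconv F hF hsep
    have h2s : γ / (2 * (1 - γ)) = t := rfl
    rw [h2s] at hpack
    have hsmul : μ ((1 + t) • K)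
        = ENNReal.ofReal ((1 + t) ^ n * ∏ i, b i) * volB := by
      rw [μ.addHaar_smul_of_nonneg (by positivity) K, hKvol, hfr, ← mul_assoc,
        ← ENNReal.ofReal_mul (by positivity)]
    have hbll : μ (closedBall (0 : E) (γ/2))
        = ENNReal.ofReal ((γ/2) ^ n) * volB := by
      rw [Measure.addHaar_closedBall' μ 0 (by positivity), hfr]
    rw [hsmul, hbll, ← mul_assoc] at hpack
    have hpack2 : (F.card : ℝ≥0∞) * ENNReal.ofReal ((γ/2) ^ n)
        ≤ ENNReal.ofReal ((1 + t) ^ n * ∏ i, b i) :=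
      (ENNReal.mul_le_mul_iff_left hvolB0 hvolBtop).1 hpack
    have hreal : (F.card : ℝ) * (γ/2) ^ n ≤ (1 + t) ^ n * ∏ i, b i := by
      rw [← ENNReal.ofReal_natCast F.card, ← ENNReal.ofReal_mul (by positivity)] at hpack2
      exact (ENNReal.ofReal_le_ofReal_iff (mul_nonneg (pow_nonneg (by linarith) n)
        (Finset.prod_nonneg fun i _ => (hbpos i).le))).1 hpack2
    have hkey : (2/γ + 1/(1-γ)) = (1+t)*(2/γ) := by
      rw [hts]; field_simp
    have hCval : C = ((1 + t) ^ n * ∏ i, b i) * (2/γ) ^ n := by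
      rw [hC, hkey]
      rw [Finset.prod_mul_distrib, Finset.prod_const, Finset.card_univ, ← hn, mul_pow]
      ring
    have hcardC : (F.card : ℝ) ≤ C := by
      rw [hCval]
      calc (F.card : ℝ) = (F.card : ℝ) * ((γ/2) * (2/γ)) ^ n := by
            rw [show (γ/2) * (2/γ) = 1 by field_simp, one_pow, mul_one]
        _ = (F.card : ℝ) * (γ/2) ^ n * (2/γ) ^ n := by rw [mul_pow, ← mul_assoc]
        _ ≤ ((1 + t) ^ n * ∏ i, b i) * (2/γ) ^ n :=
            mul_le_mul_of_nonneg_right hreal (by positivity)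
    exact Nat.le_floor hcardC
  obtain ⟨F, hF1, hF2, hF3⟩ := net_of_card_bound K γ hγ0 ⌊C⌋₊ hcard
  exact ⟨F, hF1, le_trans (Nat.cast_le.2 hF2) (Nat.floor_le hC0), hF3⟩

end Euclid2

/-- Upper bound for ellipsoid covering numbers:
`log 𝒩(E_a, B₁) ≤ ∑_{i ∈ J} log a_i + μ_γ log(3/γ)` where `J = {i : a_i > 1}`
and `μ_γ = |{i : a_i² > (1-γ)²}|`. -/
theorem stmt4 (p : ℕ) (a : Fin p → ℝ) (ha : ∀ i, 0 ≤ a i)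
    (γ : ℝ) (hγ0 : 0 < γ) (hγ2 : γ < 1 / 2) :
    Real.log (coverNum (ellipsoid p a) {v : Fin p → ℝ | ∑ i, v i ^ 2 ≤ 1})
      ≤ (∑ i ∈ Finset.univ.filter (fun i => 1 < a i), Real.log (a i))
        + ((Finset.univ.filter (fun i => (1 - γ) ^ 2 < (a i) ^ 2)).card : ℝ)
          * Real.log (3 / γ) := by
  classical
  set S : Finset (Fin p) := Finset.univ.filter (fun i => (1 - γ) ^ 2 < (a i) ^ 2) with hS
  set J : Finset (Fin p) := Finset.univ.filter (fun i => 1 < a i) with hJ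
  have hs : 0 < 1 - γ := by linarith
  have haS : ∀ i ∈ S, 1 - γ < a i := by
    intro i hi
    rw [hS, Finset.mem_filter] at hi
    exact lt_of_pow_lt_pow_left₀ 2 (ha i) hi.2
  set b : ↥S → ℝ := fun i => a i.1 with hb
  have hbS : ∀ i : ↥S, 1 - γ < b i := fun i => haS i.1 i.2
  obtain ⟨F, hF1, hF2, hF3⟩ := euclidean_ellipsoid_net b γ hγ0 hγ2 hbS
  -- the extension map
  set emb : EuclideanSpace ℝ ↥S → (Fin p → ℝ) :=
    fun w i => if h : i ∈ S then w ⟨i, h⟩ else 0 with hemb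
  -- each center lies in the ellipsoid
  have hcenter : ∀ c ∈ F, emb c ∈ ellipsoid p a := by
    intro c hc
    have hcK := hF1 hc
    simp only [Set.mem_setOf_eq] at hcK
    constructor
    · have hzero : ∀ i ∈ Finset.univ, i ∉ S → (emb c i) ^ 2 / a i ^ 2 = 0 := by
        intro i _ hiS
        simp [hemb, hiS]
      calc ∑ i, (emb c i) ^ 2 / a i ^ 2
          = ∑ i ∈ S, (emb c i) ^ 2 / a i ^ 2 :=
            (Finset.sum_subset (Finset.subset_univ S) hzero).symm
        _ = ∑ i : ↥S, (c i) ^ 2 / b i ^ 2 := by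
            rw [← Finset.sum_coe_sort]
            apply Finset.sum_congr rfl
            intro i _
            simp [hemb, i.2, hb]
        _ ≤ 1 := hcK
    · intro i hi
      by_cases h : i ∈ S
      · exact absurd hi (by have := haS i h; intro h0; rw [h0] at this; linarith)
      · simp [hemb, h]
  -- covering property
  have hcover : ∀ x ∈ ellipsoid p a, ∃ c ∈ F,
      ∑ i, (x i - emb c i) ^ 2 ≤ 1 := by
    intro x hx
    obtain ⟨hx1, hx2⟩ := hx
    set rx : EuclideanSpace ℝ ↥S := WithLp.toLp 2 (fun i => x i.1) with hrx
    have hterm_nonneg : ∀ i ∈ Finset.univ, (0:ℝ) ≤ x i ^ 2 / a i ^ 2 :=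
      fun i _ => by positivity
    have hrxK : rx ∈ {w : EuclideanSpace ℝ ↥S | ∑ i, w i ^ 2 / b i ^ 2 ≤ 1} := by
      simp only [Set.mem_setOf_eq]
      calc ∑ i : ↥S, rx i ^ 2 / b i ^ 2 = ∑ i ∈ S, x i ^ 2 / a i ^ 2 := by
            rw [← Finset.sum_coe_sort (f := fun i => x i ^ 2 / a i ^2)]
        _ ≤ ∑ i, x i ^ 2 / a i ^ 2 :=
            Finset.sum_le_sum_of_subset_of_nonneg (Finset.subset_univ S)
              (fun i hi _ => hterm_nonneg i hi)
        _ ≤ 1 := hx1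
    obtain ⟨c, hcF, hcdist⟩ := hF3 rx hrxK
    refine ⟨c, hcF, ?_⟩
    have hsplit : ∑ i, (x i - emb c i) ^ 2
        = ∑ i ∈ Finset.univ \ S, (x i - emb c i) ^ 2
          + ∑ i ∈ S, (x i - emb c i) ^ 2 :=
      (Finset.sum_sdiff (Finset.subset_univ S)).symm
    have hpart1 : ∑ i ∈ S, (x i - emb c i) ^ 2 ≤ γ ^ 2 := by
      have hd2 : dist rx c ^ 2 ≤ γ ^ 2 := pow_le_pow_left₀ dist_nonneg hcdist 2
      rw [EuclideanSpace.dist_eq, Real.sq_sqrt (by positivity)] at hd2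
      calc ∑ i ∈ S, (x i - emb c i) ^ 2
          = ∑ i : ↥S, dist (rx i) (c i) ^ 2 := by
            rw [← Finset.sum_coe_sort (f := fun i => (x i - emb c i)^2)]
            apply Finset.sum_congr rfl
            intro i _
            rw [Real.dist_eq, sq_abs]
            congr 2
            simp [hemb, i.2, hrx]
        _ ≤ γ ^ 2 := hd2
    have hpart2 : ∑ i ∈ Finset.univ \ S, (x i - emb c i) ^ 2 ≤ (1 - γ) ^ 2 := by
      have hout : ∀ i ∈ Finset.univ \ S, (x i - emb c i) ^ 2
          ≤ (1 - γ) ^ 2 * (x i ^ 2 / a i ^ 2) := by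
        intro i hi
        rw [Finset.mem_sdiff] at hi
        have hiS : i ∉ S := hi.2
        have hie : emb c i = 0 := by simp [hemb, hiS]
        rw [hie, sub_zero]
        have hbound : a i ^ 2 ≤ (1 - γ) ^ 2 := by
          by_contra hcon
          push_neg at hcon
          exact hiS (by rw [hS]; exact Finset.mem_filter.2 ⟨Finset.mem_univ i, hcon⟩)
        by_cases h0 : a i = 0
        · rw [hx2 i h0]
          simp
        · have : x i ^ 2 = a i ^ 2 * (x i ^ 2 / a i ^ 2) := by
            rw [mul_comm]
            exact (div_mul_cancel₀ _ (pow_ne_zero 2 h0)).symm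
          calc x i ^ 2 = a i ^ 2 * (x i ^ 2 / a i ^ 2) := this
            _ ≤ (1 - γ) ^ 2 * (x i ^ 2 / a i ^ 2) :=
              mul_le_mul_of_nonneg_right hbound (by positivity)
      calc ∑ i ∈ Finset.univ \ S, (x i - emb c i) ^ 2
          ≤ ∑ i ∈ Finset.univ \ S, (1 - γ) ^ 2 * (x i ^ 2 / a i ^ 2) :=
            Finset.sum_le_sum hout
        _ = (1 - γ) ^ 2 * ∑ i ∈ Finset.univ \ S, x i ^ 2 / a i ^ 2 := by
            rw [Finset.mul_sum]
        _ ≤ (1 - γ) ^ 2 * ∑ i, x i ^ 2 / a i ^ 2 := by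
            apply mul_le_mul_of_nonneg_left ?_ (by positivity)
            exact Finset.sum_le_sum_of_subset_of_nonneg (Finset.sdiff_subset)
              (fun i hi _ => hterm_nonneg i hi)
        _ ≤ (1 - γ) ^ 2 * 1 := mul_le_mul_of_nonneg_left hx1 (by positivity)
        _ = (1 - γ) ^ 2 := mul_one _
    rw [hsplit]
    nlinarith [hpart1, hpart2]
  -- coverNum is at most F.card
  have hmem : F.card ∈ {n | ∃ v : Fin n → (Fin p → ℝ),
      (∀ i, v i ∈ ellipsoid p a) ∧
      ellipsoid p a ⊆ ⋃ i, (fun w => v i + w) '' {v : Fin p → ℝ | ∑ i, v i ^ 2 ≤ 1}} := by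
    have e0 : ↥F ≃ Fin F.card := Fintype.equivFinOfCardEq (Fintype.card_coe F)
    refine ⟨fun j => emb ((e0.symm j) : ↥F).1, fun j => hcenter _ (e0.symm j).2, ?_⟩
    intro x hx
    obtain ⟨c, hcF, hcle⟩ := hcover x hx
    rw [Set.mem_iUnion]
    refine ⟨e0 ⟨c, hcF⟩, ⟨x - emb c, ?_, ?_⟩⟩
    · simpa using hcle
    · simp only [Equiv.symm_apply_apply]
      abel
  have hNle : coverNum (ellipsoid p a) {v : Fin p → ℝ | ∑ i, v i ^ 2 ≤ 1} ≤ F.card :=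
    Nat.sInf_le hmem
  -- final logarithmic estimate
  set c₀ : ℝ := 2/γ + 1/(1-γ) with hc₀
  have hc₀pos : 0 < c₀ := by positivity
  have hc₀le : c₀ ≤ 3/γ := by
    rw [hc₀]
    have h1 : 1/(1-γ) ≤ 1/γ := by
      apply one_div_le_one_div_of_le hγ0
      linarith
    have : (3:ℝ)/γ = 2/γ + 1/γ := by ring
    linarith
  have h3γ : (1:ℝ) ≤ 3/γ := by
    rw [le_div_iff₀ hγ0]; linarith
  have hlog3γ : 0 ≤ Real.log (3/γ) := Real.log_nonneg h3γ
  have hRHS_nonneg : 0 ≤ (∑ i ∈ J, Real.log (a i)) + (S.card : ℝ) * Real.log (3/γ) := by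
    apply add_nonneg
    · apply Finset.sum_nonneg
      intro i hi
      rw [hJ, Finset.mem_filter] at hi
      exact Real.log_nonneg hi.2.le
    · exact mul_nonneg (Nat.cast_nonneg _) hlog3γ
  rcases Nat.eq_zero_or_pos (coverNum (ellipsoid p a) {v : Fin p → ℝ | ∑ i, v i ^ 2 ≤ 1})
    with h0 | hpos
  · rw [h0]
    simpa using hRHS_nonneg
  -- logs
  have hlogC : Real.log (∏ i : ↥S, (c₀ * b i))
      ≤ (∑ i ∈ J, Real.log (a i)) + (S.card : ℝ) * Real.log (3/γ) := by
    rw [Finset.prod_coe_sort (f := fun i => c₀ * a i)]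
    rw [Real.log_prod (fun i hi => by
      have := haS i hi
      exact ne_of_gt (mul_pos hc₀pos (by linarith)))]
    have hterm : ∀ i ∈ S, Real.log (c₀ * a i)
        ≤ Real.log (3/γ) + Real.log (max (a i) 1) := by
      intro i hi
      have hai : 0 < a i := by have := haS i hi; linarith
      have hle : c₀ * a i ≤ (3/γ) * max (a i) 1 := by
        apply mul_le_mul hc₀le (le_max_left _ _) hai.le (by positivity)
      calc Real.log (c₀ * a i) ≤ Real.log ((3/γ) * max (a i) 1) :=
            Real.log_le_log (by positivity) hle
        _ = Real.log (3/γ) + Real.log (max (a i) 1) :=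
            Real.log_mul (by positivity) (by positivity)
    calc ∑ i ∈ S, Real.log (c₀ * a i)
        ≤ ∑ i ∈ S, (Real.log (3/γ) + Real.log (max (a i) 1)) :=
          Finset.sum_le_sum hterm
      _ = (S.card : ℝ) * Real.log (3/γ) + ∑ i ∈ S, Real.log (max (a i) 1) := by
          rw [Finset.sum_add_distrib, Finset.sum_const, nsmul_eq_mul]
      _ = (S.card : ℝ) * Real.log (3/γ) + ∑ i ∈ J, Real.log (a i) := by
          congr 1
          have hJS : J ⊆ S := by
            intro i hi
            rw [hJ, Finset.mem_filter] at hi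
            rw [hS, Finset.mem_filter]
            refine ⟨Finset.mem_univ i, ?_⟩
            nlinarith [hi.2]
          rw [← Finset.sum_subset hJS (fun i hiS hiJ => ?_)]
          · apply Finset.sum_congr rfl
            intro i hi
            rw [hJ, Finset.mem_filter] at hi
            rw [max_eq_left hi.2.le]
          · rw [hJ, Finset.mem_filter] at hiJ
            push_neg at hiJ
            rw [max_eq_right (hiJ (Finset.mem_univ i)), Real.log_one]
      _ = (∑ i ∈ J, Real.log (a i)) + (S.card : ℝ) * Real.log (3/γ) := by ring
  calc Real.log (coverNum (ellipsoid p a) {v : Fin p → ℝ | ∑ i, v i ^ 2 ≤ 1})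
      ≤ Real.log (∏ i : ↥S, (c₀ * b i)) := by
        apply Real.log_le_log (by exact_mod_cast hpos)
        calc ((coverNum (ellipsoid p a) {v : Fin p → ℝ | ∑ i, v i ^ 2 ≤ 1} : ℝ))
            ≤ (F.card : ℝ) := by exact_mod_cast hNle
          _ ≤ ∏ i : ↥S, (c₀ * b i) := hF2
    _ ≤ _ := hlogC
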